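/- Let r ≥ 1 and let π be the spaced seed of span m = r + 2 over the binary alphabet {0,1} with π_1 = π_{r+2} = {1} and π_i = {0,1} for 2 ≤ i ≤ r + 1 (so R_π = {2, …, r+1}). Then no two distinct non-final states of S_π are equivalent: for any two distinct pairs q_1 = (X_1,t_1) and q_2 = (X_2,t_2) with X_j ⊆ {2, …, r+1} and max(X_j ∪ {0}) + t_j ≤ r + 1 for j = 1,2, there exists a word u ∈ {0,1}* such that exactly one of ψ*(q_1, u) and ψ*(q_2, u) is a final state. -/

import Mathlib

/-- The set `R_π` of non-`#` positions of a subset seed `π` of span `m` over an alphabet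
with distinguished "match" letter `one`: positions `i ∈ [1..m]` with `π i ≠ {one}`. -/
def Rpi {A : Type*} [DecidableEq A] (m : ℕ) (one : A) (π : ℕ → Finset A) : Finset ℕ :=
  (Finset.Icc 1 m).filter (fun i => π i ≠ {one})

/-- Transition function `ψ` of the subset seed automaton `S_π`.  States are pairs
`(X, t)` with `X : Finset ℕ` and `t : ℕ`; note that `max (X ∪ {0}) = X.sup id`.
A state is final when `max (X ∪ {0}) + t ≥ m`; final states are fixed.  On a
non-final state `(X, t)`: reading `one` yields `(X, t+1)`; reading `a ≠ one`
yields `(X_U ∪ X_V, 0)` with `X_U = {x ∈ R_π : x ≤ t+1 ∧ a ∈ π x}` and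
`X_V = {x+t+1 : x ∈ X, x+t+1 ≤ m, a ∈ π (x+t+1)}`. -/
def seedStep {A : Type*} [DecidableEq A] (m : ℕ) (one : A) (π : ℕ → Finset A)
    (q : Finset ℕ × ℕ) (a : A) : Finset ℕ × ℕ :=
  if m ≤ q.1.sup id + q.2 then q
  else if a = one then (q.1, q.2 + 1)
  else ((Rpi m one π).filter (fun x => x ≤ q.2 + 1 ∧ a ∈ π x) ∪
        ((q.1.filter (fun x => x + q.2 + 1 ≤ m ∧ a ∈ π (x + q.2 + 1))).image
          (fun x => x + q.2 + 1)), 0)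

/-- The extension `ψ*` of the transition function of `S_π` to words,
reading letters left to right from state `q`. -/
def seedRun {A : Type*} [DecidableEq A] (m : ℕ) (one : A) (π : ℕ → Finset A)
    (q : Finset ℕ × ℕ) : List A → Finset ℕ × ℕ
  | [] => q
  | a :: s => seedRun m one π (seedStep m one π q a) s

lemma xor'_swap {a b : Prop} (h : Xor' a b) : Xor' b a := by
  rcases h with ⟨ha, hb⟩ | ⟨hb, ha⟩
  · exact Or.inr ⟨ha, hb⟩
  · exact Or.inl ⟨hb, ha⟩

lemma seedRun_append {A : Type*} [DecidableEq A] (m : ℕ) (one : A) (π : ℕ → Finset A)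
    (u v : List A) : ∀ q, seedRun m one π q (u ++ v) = seedRun m one π (seedRun m one π q u) v := by
  induction u with
  | nil => intro q; simp [seedRun]
  | cons a u ih => intro q; simp only [List.cons_append, seedRun]; exact ih _

lemma run_ones {A : Type*} [DecidableEq A] (m : ℕ) (one : A) (π : ℕ → Finset A) :
    ∀ (k : ℕ) (q : Finset ℕ × ℕ),
      (m ≤ (seedRun m one π q (List.replicate k one)).1.sup id
            + (seedRun m one π q (List.replicate k one)).2)
        ↔ m ≤ q.1.sup id + q.2 + k := by
  intro k
  induction k with
  | zero => intro q; simp [seedRun]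
  | succ k ih =>
    intro q
    rw [List.replicate_succ]
    simp only [seedRun]
    by_cases h : m ≤ q.1.sup id + q.2
    · have hs : seedStep m one π q one = q := by simp [seedStep, h]
      rw [hs, ih]
      omega
    · have hs : seedStep m one π q one = (q.1, q.2 + 1) := by simp [seedStep, h]
      rw [hs, ih]
      simp only []
      omega

section Spaced

variable {r : ℕ} {π : ℕ → Finset (Fin 2)}

lemma Rpi_eq (hπ1 : π 1 = {1}) (hπlast : π (r + 2) = {1})
    (hπmid : ∀ i : ℕ, 2 ≤ i → i ≤ r + 1 → π i = Finset.univ) :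
    Rpi (r + 2) 1 π = Finset.Icc 2 (r + 1) := by
  ext i
  simp only [Rpi, Finset.mem_filter, Finset.mem_Icc]
  constructor
  · rintro ⟨⟨h1, h2⟩, hne⟩
    have hi1 : i ≠ 1 := fun h => hne (h ▸ hπ1)
    have hi2 : i ≠ r + 2 := fun h => hne (h ▸ hπlast)
    omega
  · rintro ⟨h1, h2⟩
    refine ⟨⟨by omega, by omega⟩, ?_⟩
    rw [hπmid i h1 h2]
    decide

lemma step_zero (hπ1 : π 1 = {1}) (hπlast : π (r + 2) = {1})
    (hπmid : ∀ i : ℕ, 2 ≤ i → i ≤ r + 1 → π i = Finset.univ)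
    (X : Finset ℕ) (t : ℕ) (hX : X ⊆ Finset.Icc 2 (r + 1))
    (hnf : X.sup id + t ≤ r + 1) :
    seedStep (r + 2) 1 π (X, t) 0
      = (Finset.Icc 2 (min (t + 1) (r + 1)) ∪
          (X.filter (fun x => x + t + 1 ≤ r + 1)).image (fun x => x + t + 1), 0) := by
  have hnf' : ¬ (r + 2 ≤ X.sup id + t) := by omega
  show (if r + 2 ≤ X.sup id + t then _ else _) = _
  rw [if_neg hnf', if_neg (by decide : ¬ ((0 : Fin 2) = 1))]
  refine Prod.ext ?_ rfl
  show (Rpi (r+2) 1 π).filter _ ∪ _ = _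
  rw [Rpi_eq hπ1 hπlast hπmid]
  ext y
  simp only [Finset.mem_union, Finset.mem_filter, Finset.mem_Icc, Finset.mem_image]
  constructor
  · rintro (⟨⟨h1, h2⟩, h3, _⟩ | ⟨x, ⟨hxX, hle, hmem⟩, rfl⟩)
    · exact Or.inl ⟨h1, by omega⟩
    · refine Or.inr ⟨x, ⟨hxX, ?_⟩, rfl⟩
      by_contra hgt
      have hx2 : 2 ≤ x ∧ x ≤ r + 1 := Finset.mem_Icc.mp (hX hxX)
      have he : x + t + 1 = r + 2 := by omega
      rw [he, hπlast] at hmem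
      exact absurd (Finset.mem_singleton.mp hmem) (by decide)
  · rintro (⟨h1, h2⟩ | ⟨x, ⟨hxX, hle⟩, rfl⟩)
    · refine Or.inl ⟨⟨h1, by omega⟩, by omega, ?_⟩
      rw [hπmid y h1 (by omega)]
      exact Finset.mem_univ _
    · have hx2 : 2 ≤ x ∧ x ≤ r + 1 := Finset.mem_Icc.mp (hX hxX)
      refine Or.inr ⟨x, ⟨hxX, by omega, ?_⟩, rfl⟩
      rw [hπmid (x + t + 1) (by omega) (by omega)]
      exact Finset.mem_univ _

lemma run_zeros (hπ1 : π 1 = {1}) (hπlast : π (r + 2) = {1})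
    (hπmid : ∀ i : ℕ, 2 ≤ i → i ≤ r + 1 → π i = Finset.univ) :
    ∀ (k : ℕ), 1 ≤ k → ∀ (X : Finset ℕ) (t : ℕ), X ⊆ Finset.Icc 2 (r + 1) →
      X.sup id + t ≤ r + 1 →
      seedRun (r + 2) 1 π (X, t) (List.replicate k 0)
        = (Finset.Icc (k + 1) (min (t + k) (r + 1)) ∪
            (X.filter (fun x => x + t + k ≤ r + 1)).image (fun x => x + t + k), 0) := by
  intro k hk
  induction k, hk using Nat.le_induction with
  | base =>
    intro X t hX hnf
    rw [List.replicate_one]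
    simp only [seedRun]
    rw [step_zero hπ1 hπlast hπmid X t hX hnf]
  | succ k hk ih =>
    intro X t hX hnf
    rw [List.replicate_succ]
    simp only [seedRun]
    rw [step_zero hπ1 hπlast hπmid X t hX hnf]
    set Z : Finset ℕ := Finset.Icc 2 (min (t + 1) (r + 1)) ∪
        (X.filter (fun x => x + t + 1 ≤ r + 1)).image (fun x => x + t + 1) with hZ
    have hZiff : ∀ z : ℕ, z ∈ Z ↔
        ((2 ≤ z ∧ z ≤ t + 1 ∧ z ≤ r + 1) ∨ ∃ x, x ∈ X ∧ x + t + 1 = z ∧ z ≤ r + 1) := by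
      intro z
      simp only [hZ, Finset.mem_union, Finset.mem_Icc, Finset.mem_image, Finset.mem_filter,
        le_min_iff]
      constructor
      · rintro (⟨h1, h2, h3⟩ | ⟨x, ⟨hx, hle⟩, rfl⟩)
        · exact Or.inl ⟨h1, h2, h3⟩
        · exact Or.inr ⟨x, hx, rfl, hle⟩
      · rintro (⟨h1, h2, h3⟩ | ⟨x, hx, rfl, hle⟩)
        · exact Or.inl ⟨h1, h2, h3⟩
        · exact Or.inr ⟨x, ⟨hx, hle⟩, rfl⟩
    have hZsub : Z ⊆ Finset.Icc 2 (r + 1) := by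
      intro y hy
      rcases (hZiff y).mp hy with ⟨h1, _, h3⟩ | ⟨x, hx, heq, hle⟩
      · exact Finset.mem_Icc.mpr ⟨h1, h3⟩
      · have := Finset.mem_Icc.mp (hX hx)
        exact Finset.mem_Icc.mpr ⟨by omega, hle⟩
    have hZsup : Z.sup id + 0 ≤ r + 1 := by
      rw [Nat.add_zero]
      refine Finset.sup_le fun y hy => ?_
      exact (Finset.mem_Icc.mp (hZsub hy)).2
    rw [ih Z 0 hZsub hZsup]
    refine Prod.ext ?_ rfl
    ext y
    simp only [Finset.mem_union, Finset.mem_Icc, Finset.mem_image, Finset.mem_filter,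
      le_min_iff, Nat.add_zero, hZiff]
    constructor
    · rintro (⟨h1, h2, h3⟩ | ⟨x', ⟨hx', hle⟩, rfl⟩)
      · omega
      · rcases hx' with ⟨g1, g2, g3⟩ | ⟨x, hxX, heq, hle'⟩
        · exact Or.inl ⟨by omega, by omega, by omega⟩
        · have := Finset.mem_Icc.mp (hX hxX)
          exact Or.inr ⟨x, ⟨hxX, by omega⟩, by omega⟩
    · rintro (⟨h1, h2, h3⟩ | ⟨x, ⟨hxX, hle⟩, rfl⟩)
      · exact Or.inr ⟨y - k, ⟨Or.inl ⟨by omega, by omega, by omega⟩, by omega⟩, by omega⟩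
      · have := Finset.mem_Icc.mp (hX hxX)
        exact Or.inr ⟨x + t + 1, ⟨Or.inr ⟨x, hxX, rfl, by omega⟩, by omega⟩, by omega⟩

lemma final_zeros_one (hπ1 : π 1 = {1}) (hπlast : π (r + 2) = {1})
    (hπmid : ∀ i : ℕ, 2 ≤ i → i ≤ r + 1 → π i = Finset.univ)
    (k : ℕ) (hk : 1 ≤ k) (X : Finset ℕ) (t : ℕ) (hX : X ⊆ Finset.Icc 2 (r + 1))
    (hnf : X.sup id + t ≤ r + 1) :
    (r + 2 ≤ (seedRun (r + 2) 1 π (X, t) (List.replicate k 0 ++ [1])).1.sup id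
        + (seedRun (r + 2) 1 π (X, t) (List.replicate k 0 ++ [1])).2)
      ↔ ((k ≤ r ∧ r + 1 ≤ t + k) ∨ ∃ x ∈ X, x + t + k = r + 1) := by
  rw [seedRun_append, run_zeros hπ1 hπlast hπmid k hk X t hX hnf]
  set Z : Finset ℕ := Finset.Icc (k + 1) (min (t + k) (r + 1)) ∪
      (X.filter (fun x => x + t + k ≤ r + 1)).image (fun x => x + t + k) with hZ
  have hZmem : ∀ y ∈ Z, y ≤ r + 1 := by
    intro y hy
    rcases Finset.mem_union.mp hy with h | h
    · have := Finset.mem_Icc.mp h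
      omega
    · rcases Finset.mem_image.mp h with ⟨x, hx, rfl⟩
      exact (Finset.mem_filter.mp hx).2
  have hZsup : Z.sup id ≤ r + 1 := Finset.sup_le hZmem
  have hstep : seedStep (r + 2) 1 π (Z, 0) 1 = (Z, 1) := by
    show (if r + 2 ≤ Z.sup id + 0 then _ else _) = _
    rw [if_neg (by omega), if_pos rfl]
  have hrun : seedRun (r + 2) 1 π (Z, 0) [1] = (Z, 1) := by
    simp only [seedRun, hstep]
  rw [hrun]
  show (r + 2 ≤ Z.sup id + 1) ↔ _
  constructor
  · intro h
    have h' : (r + 1 : ℕ) ≤ Z.sup id := by omega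
    rcases (Finset.le_sup_iff (by omega : (0:ℕ) < r + 1)).mp h' with ⟨y, hy, hy'⟩
    have hyle := hZmem y hy
    have hyeq : y = r + 1 := le_antisymm hyle (by simpa [id] using hy')
    subst hyeq
    rcases Finset.mem_union.mp hy with h2 | h2
    · have := Finset.mem_Icc.mp h2
      exact Or.inl ⟨by omega, by omega⟩
    · rcases Finset.mem_image.mp h2 with ⟨x, hx, hxe⟩
      exact Or.inr ⟨x, (Finset.mem_filter.mp hx).1, hxe⟩
  · intro h
    have hmem : (r + 1 : ℕ) ∈ Z := by
      rcases h with ⟨h1, h2⟩ | ⟨x, hxX, hxe⟩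
      · refine Finset.mem_union.mpr (Or.inl (Finset.mem_Icc.mpr ⟨by omega, le_min (by omega) le_rfl⟩))
      · exact Finset.mem_union.mpr (Or.inr (Finset.mem_image.mpr
          ⟨x, Finset.mem_filter.mpr ⟨hxX, by omega⟩, hxe⟩))
    have hle := Finset.le_sup (f := id) hmem
    simp only [id] at hle
    omega

end Spaced

section MainAux

variable {r : ℕ} {π : ℕ → Finset (Fin 2)}

lemma aux_distinguish (hπ1 : π 1 = {1}) (hπlast : π (r + 2) = {1})
    (hπmid : ∀ i : ℕ, 2 ≤ i → i ≤ r + 1 → π i = Finset.univ)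
    (X₁ X₂ : Finset ℕ) (t₁ t₂ : ℕ)
    (hX₁ : X₁ ⊆ Finset.Icc 2 (r + 1)) (hX₂ : X₂ ⊆ Finset.Icc 2 (r + 1))
    (hnf₁ : X₁.sup id + t₁ ≤ r + 1) (hnf₂ : X₂.sup id + t₂ ≤ r + 1)
    (h : X₁.sup id + t₁ < X₂.sup id + t₂
      ∨ (X₁.sup id + t₁ = X₂.sup id + t₂ ∧
          (t₁ < t₂ ∨ (t₁ = t₂ ∧ ∃ x, x ∈ X₁ ∧ x ∉ X₂)))) :
    ∃ u : List (Fin 2),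
      Xor' (r + 2 ≤ (seedRun (r + 2) 1 π (X₁, t₁) u).1.sup id
              + (seedRun (r + 2) 1 π (X₁, t₁) u).2)
           (r + 2 ≤ (seedRun (r + 2) 1 π (X₂, t₂) u).1.sup id
              + (seedRun (r + 2) 1 π (X₂, t₂) u).2) := by
  rcases h with hs | ⟨hs, ht | ⟨ht, x, hx1, hx2⟩⟩
  · -- different scores: use ones
    refine ⟨List.replicate (r + 2 - (X₂.sup id + t₂)) 1, Or.inr ⟨?_, ?_⟩⟩
    · refine (run_ones _ _ _ _ _).mpr ?_
      show r + 2 ≤ X₂.sup id + t₂ + _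
      omega
    · intro hA
      have h' : r + 2 ≤ X₁.sup id + t₁ + (r + 2 - (X₂.sup id + t₂)) :=
        (run_ones _ _ _ _ _).mp hA
      omega
  · -- same scores, t₁ < t₂ : use 0^(r - t₁) ++ [1]
    have hX₁ne : X₁.Nonempty := by
      rcases Finset.eq_empty_or_nonempty X₁ with he | hne
      · exfalso
        rw [he] at hs
        simp only [Finset.sup_empty, bot_eq_zero, Nat.zero_add] at hs
        omega
      · exact hne
    obtain ⟨x₀, hx₀⟩ := hX₁ne
    have hx₀2 : 2 ≤ x₀ := (Finset.mem_Icc.mp (hX₁ hx₀)).1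
    have hx₀sup : x₀ ≤ X₁.sup id := Finset.le_sup (f := id) hx₀
    have ht₁ : t₁ + 1 ≤ r := by omega
    refine ⟨List.replicate (r - t₁) 0 ++ [1], Or.inr ⟨?_, ?_⟩⟩
    · rw [final_zeros_one hπ1 hπlast hπmid (r - t₁) (by omega) X₂ t₂ hX₂ hnf₂]
      exact Or.inl ⟨by omega, by omega⟩
    · rw [final_zeros_one hπ1 hπlast hπmid (r - t₁) (by omega) X₁ t₁ hX₁ hnf₁]
      rintro (⟨h1, h2⟩ | ⟨x, hxX, hxe⟩)
      · omega
      · have := Finset.mem_Icc.mp (hX₁ hxX)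
        omega
  · -- same scores, same t, x ∈ X₁ \ X₂
    subst ht
    have hX₂ne : X₂.Nonempty := by
      rcases Finset.eq_empty_or_nonempty X₂ with he | hne
      · exfalso
        rw [he] at hs
        simp only [Finset.sup_empty, bot_eq_zero] at hs
        have hx2' : 2 ≤ x := (Finset.mem_Icc.mp (hX₁ hx1)).1
        have := Finset.le_sup (f := id) hx1
        simp only [id] at this
        omega
      · exact hne
    obtain ⟨b, hbX, hbsup⟩ := Finset.exists_mem_eq_sup X₂ hX₂ne id
    have hxsup1 : x ≤ X₁.sup id := by
      have := Finset.le_sup (f := id) hx1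
      simpa [id] using this
    have hxlt : x < X₂.sup id := by
      rcases Nat.lt_or_ge x (X₂.sup id) with h | h
      · exact h
      · exfalso
        have hxe : x = X₂.sup id := by omega
        rw [hbsup] at hxe
        simp only [id] at hxe
        exact hx2 (hxe ▸ hbX)
    have hx2' : 2 ≤ x := (Finset.mem_Icc.mp (hX₁ hx1)).1
    refine ⟨List.replicate (r + 1 - t₁ - x) 0 ++ [1], Or.inl ⟨?_, ?_⟩⟩
    · rw [final_zeros_one hπ1 hπlast hπmid (r + 1 - t₁ - x) (by omega) X₁ t₁ hX₁ hnf₁]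
      exact Or.inr ⟨x, hx1, by omega⟩
    · rw [final_zeros_one hπ1 hπlast hπmid (r + 1 - t₁ - x) (by omega) X₂ t₁ hX₂ hnf₂]
      rintro (⟨h1, h2⟩ | ⟨x', hx'X, hx'e⟩)
      · omega
      · have hx'' : x' = x := by omega
        exact hx2 (hx'' ▸ hx'X)

end MainAux


/-- for the spaced seed `π = # _^r #` of span `m = r + 2` over `Fin 2`, no two
distinct non-final states of `S_π` are equivalent: there is a word `u` such that exactly one
of `ψ*(q₁,u)`, `ψ*(q₂,u)` is final (final meaning `max(X ∪ {0}) + t ≥ r + 2`). -/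
theorem spacedSeed_nonfinal_states_pairwise_inequivalent
    (r : ℕ) (hr : 1 ≤ r) (π : ℕ → Finset (Fin 2))
    (hπ1 : π 1 = {1}) (hπlast : π (r + 2) = {1})
    (hπmid : ∀ i : ℕ, 2 ≤ i → i ≤ r + 1 → π i = Finset.univ)
    (X₁ X₂ : Finset ℕ) (t₁ t₂ : ℕ)
    (hX₁ : X₁ ⊆ Finset.Icc 2 (r + 1)) (hX₂ : X₂ ⊆ Finset.Icc 2 (r + 1))
    (hnf₁ : X₁.sup id + t₁ ≤ r + 1) (hnf₂ : X₂.sup id + t₂ ≤ r + 1)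
    (hne : (X₁, t₁) ≠ (X₂, t₂)) :
    ∃ u : List (Fin 2),
      Xor' (r + 2 ≤ (seedRun (r + 2) 1 π (X₁, t₁) u).1.sup id
              + (seedRun (r + 2) 1 π (X₁, t₁) u).2)
           (r + 2 ≤ (seedRun (r + 2) 1 π (X₂, t₂) u).1.sup id
              + (seedRun (r + 2) 1 π (X₂, t₂) u).2) := by
  rcases Nat.lt_trichotomy (X₁.sup id + t₁) (X₂.sup id + t₂) with hs | hs | hs
  · exact aux_distinguish hπ1 hπlast hπmid X₁ X₂ t₁ t₂ hX₁ hX₂ hnf₁ hnf₂ (Or.inl hs)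
  · rcases Nat.lt_trichotomy t₁ t₂ with ht | ht | ht
    · exact aux_distinguish hπ1 hπlast hπmid X₁ X₂ t₁ t₂ hX₁ hX₂ hnf₁ hnf₂
        (Or.inr ⟨hs, Or.inl ht⟩)
    · -- t₁ = t₂, so X₁ ≠ X₂
      have hXne : X₁ ≠ X₂ := by
        intro h
        exact hne (by rw [h, ht])
      have hdiff : (∃ x, x ∈ X₁ ∧ x ∉ X₂) ∨ (∃ x, x ∈ X₂ ∧ x ∉ X₁) := by
        by_contra hc
        push_neg at hc
        exact hXne (Finset.ext fun a => ⟨fun ha => hc.1 a ha, fun ha => hc.2 a ha⟩)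
      rcases hdiff with ⟨x, hx1, hx2⟩ | ⟨x, hx1, hx2⟩
      · exact aux_distinguish hπ1 hπlast hπmid X₁ X₂ t₁ t₂ hX₁ hX₂ hnf₁ hnf₂
          (Or.inr ⟨hs, Or.inr ⟨ht, x, hx1, hx2⟩⟩)
      · obtain ⟨u, hu⟩ := aux_distinguish hπ1 hπlast hπmid X₂ X₁ t₂ t₁ hX₂ hX₁ hnf₂ hnf₁
          (Or.inr ⟨hs.symm, Or.inr ⟨ht.symm, x, hx1, hx2⟩⟩)
        exact ⟨u, xor'_swap hu⟩
    · obtain ⟨u, hu⟩ := aux_distinguish hπ1 hπlast hπmid X₂ X₁ t₂ t₁ hX₂ hX₁ hnf₂ hnf₁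
        (Or.inr ⟨hs.symm, Or.inl ht⟩)
      exact ⟨u, xor'_swap hu⟩
  · obtain ⟨u, hu⟩ := aux_distinguish hπ1 hπlast hπmid X₂ X₁ t₂ t₁ hX₂ hX₁ hnf₂ hnf₁ (Or.inl hs)
    exact ⟨u, xor'_swap hu⟩
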